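/- Let ρ be a positive integer and define α_c(ρ) := inf{α > 0 : there exists x ∈ [0,1] with x(1 − 2(1 − (1−x)²)^ρ) + 1 − 1/α > 0}. Then for every α with α_c(ρ) < α < 1, the equation x(1 − 2(1 − (1−x)²)^ρ) + 1 − 1/α = 0 has exactly two distinct solutions x in the open interval (0,1). -/

import Mathlib

noncomputable def alphaC (ρ : ℕ) : ℝ :=
  sInf {α : ℝ | 0 < α ∧ ∃ x ∈ Set.Icc (0:ℝ) 1,
    x * (1 - 2 * (1 - (1 - x) ^ 2) ^ ρ) + 1 - 1 / α > 0}

open Real Set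

/-- auxiliary log function whose zeros on `(c,1)` correspond to roots. -/
noncomputable def Dfun (ρ : ℕ) (c : ℝ) (x : ℝ) : ℝ :=
  ((ρ:ℝ)+1) * Real.log x + (ρ:ℝ) * Real.log (2 - x) - Real.log (x - c) + Real.log 2

noncomputable def dfun (ρ : ℕ) (c : ℝ) (x : ℝ) : ℝ :=
  ((ρ:ℝ)+1) / x - (ρ:ℝ) / (2 - x) - 1 / (x - c)

noncomputable def Pfun (ρ : ℕ) (c : ℝ) (x : ℝ) : ℝ :=
  ((ρ:ℝ)+1) * (2 - x) * (x - c) - (ρ:ℝ) * x * (x - c) - x * (2 - x)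

lemma hasDerivD (ρ : ℕ) (c x : ℝ) (hx0 : 0 < x) (hx2 : x < 2) (hxc : c < x) :
    HasDerivAt (Dfun ρ c) (dfun ρ c x) x := by
  have h1 : HasDerivAt (fun y : ℝ => ((ρ:ℝ)+1) * Real.log y) (((ρ:ℝ)+1) * x⁻¹) x :=
    (Real.hasDerivAt_log hx0.ne').const_mul _
  have h2 : HasDerivAt (fun y : ℝ => (2:ℝ) - y) (-1) x := (hasDerivAt_id x).const_sub 2
  have h2' : HasDerivAt (fun y : ℝ => (ρ:ℝ) * Real.log (2 - y)) ((ρ:ℝ) * ((-1) / (2 - x))) x :=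
    (h2.log (by linarith)).const_mul _
  have h3 : HasDerivAt (fun y : ℝ => y - c) 1 x := (hasDerivAt_id x).sub_const c
  have h3' : HasDerivAt (fun y : ℝ => Real.log (y - c)) (1 / (x - c)) x :=
    h3.log (by linarith)
  have H := (((h1.add h2').sub h3').add_const (Real.log 2))
  refine H.congr_deriv ?_
  unfold dfun
  field_simp
  ring

lemma root_facts (ρ : ℕ) (c : ℝ) (z : ℝ) (hz : z ∈ Set.Ioo (0:ℝ) 1)
    (e : z * (1 - 2 * (1 - (1 - z) ^ 2) ^ ρ) = c) :
    c < z ∧ Dfun ρ c z = 0 := by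
  obtain ⟨hz0, hz1⟩ := hz
  set t : ℝ := 1 - (1 - z)^2 with ht
  have htz : t = z * (2 - z) := by rw [ht]; ring
  clear_value t
  have htpos : 0 < t := by rw [htz]; exact mul_pos hz0 (by linarith)
  have htρ : 0 < t ^ ρ := pow_pos htpos ρ
  have e' : z - c = 2 * z * t ^ ρ := by linear_combination e
  have hcz : c < z := by nlinarith [mul_pos hz0 htρ]
  refine ⟨hcz, ?_⟩
  have hlog1 : Real.log (z - c) = Real.log 2 + Real.log z + (ρ:ℝ) * Real.log t := by
    rw [e', Real.log_mul (by positivity) (by positivity),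
      Real.log_mul (by norm_num) hz0.ne', Real.log_pow]
  have hlog2 : Real.log t = Real.log z + Real.log (2 - z) := by
    rw [htz, Real.log_mul hz0.ne' (by linarith)]
  unfold Dfun
  rw [hlog1, hlog2]; ring

lemma Psign (ρ : ℕ) (c : ℝ) (hc : 0 < c) (w : ℝ) (hw2 : w < 2) (hwc : c < w) :
    Pfun ρ c w = dfun ρ c w * (w * (2 - w) * (w - c)) := by
  have h0 : (0:ℝ) < w := lt_trans hc hwc
  have h0' : w ≠ 0 := h0.ne'
  have h2' : (2:ℝ) - w ≠ 0 := by linarith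
  have hc' : w - c ≠ 0 := by linarith
  unfold Pfun dfun
  field_simp

lemma no_three (ρ : ℕ) (hρ : 1 ≤ ρ) (c : ℝ) (hc : 0 < c)
    (z₁ z₂ z₃ : ℝ) (h1 : z₁ ∈ Set.Ioo (0:ℝ) 1) (h2 : z₂ ∈ Set.Ioo (0:ℝ) 1)
    (h3 : z₃ ∈ Set.Ioo (0:ℝ) 1) (h12 : z₁ < z₂) (h23 : z₂ < z₃)
    (e1 : z₁ * (1 - 2 * (1 - (1 - z₁) ^ 2) ^ ρ) = c)
    (e2 : z₂ * (1 - 2 * (1 - (1 - z₂) ^ 2) ^ ρ) = c)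
    (e3 : z₃ * (1 - 2 * (1 - (1 - z₃) ^ 2) ^ ρ) = c) : False := by
  obtain ⟨hc1, hD1⟩ := root_facts ρ c z₁ h1 e1
  obtain ⟨hc2, hD2⟩ := root_facts ρ c z₂ h2 e2
  obtain ⟨hc3, hD3⟩ := root_facts ρ c z₃ h3 e3
  have hcont : ∀ a b : ℝ, c < a → b ≤ 1 → ContinuousOn (Dfun ρ c) (Set.Icc a b) := by
    intro a b ha hb x hx
    have hcx : c < x := lt_of_lt_of_le ha hx.1
    exact (hasDerivD ρ c x (hc.trans hcx) (by linarith [hx.2]) hcx).continuousAt.continuousWithinAt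
  have hderiv : ∀ a b : ℝ, c < a → b ≤ 1 → ∀ x ∈ Set.Ioo a b, HasDerivAt (Dfun ρ c) (dfun ρ c x) x := by
    intro a b ha hb x hx
    have hcx : c < x := ha.trans hx.1
    exact hasDerivD ρ c x (hc.trans hcx) (by linarith [hx.2]) hcx
  obtain ⟨w₁, hw₁, hd₁⟩ := exists_hasDerivAt_eq_zero h12 (hcont z₁ z₂ hc1 h2.2.le)
    (hD1.trans hD2.symm) (hderiv z₁ z₂ hc1 h2.2.le)
  obtain ⟨w₂, hw₂, hd₂⟩ := exists_hasDerivAt_eq_zero h23 (hcont z₂ z₃ hc2 h3.2.le)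
    (hD2.trans hD3.symm) (hderiv z₂ z₃ hc2 h3.2.le)
  obtain ⟨w₃, hw₃, hd₃⟩ := exists_hasDerivAt_eq_slope (Dfun ρ c) (dfun ρ c) h3.2
    (hcont z₃ 1 hc3 le_rfl) (hderiv z₃ 1 hc3 le_rfl)
  -- D at 1 is positive
  have hc1' : c < 1 := hc1.trans h1.2
  have hDone : Dfun ρ c 1 = Real.log 2 - Real.log (1 - c) := by
    unfold Dfun; norm_num; ring
  have hDone_pos : 0 < Dfun ρ c 1 := by
    rw [hDone]
    have := Real.log_lt_log (by linarith : (0:ℝ) < 1 - c) (by linarith : 1 - c < 2)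
    linarith
  have hd₃pos : 0 < dfun ρ c w₃ := by
    rw [hd₃, hD3]
    exact div_pos (by simpa using hDone_pos) (by linarith [h3.2])
  -- Facts about w's
  have hwc₁ : c < w₁ := hc1.trans hw₁.1
  have hwc₂ : c < w₂ := hc2.trans hw₂.1
  have hwc₃ : c < w₃ := hc3.trans hw₃.1
  have hw2₁ : w₁ < 2 := by linarith [hw₁.2, h2.2]
  have hw2₂ : w₂ < 2 := by linarith [hw₂.2, h3.2]
  have hw2₃ : w₃ < 2 := by linarith [hw₃.2]
  have hP₁ : Pfun ρ c w₁ = 0 := by rw [Psign ρ c hc w₁ hw2₁ hwc₁, hd₁, zero_mul]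
  have hP₂ : Pfun ρ c w₂ = 0 := by rw [Psign ρ c hc w₂ hw2₂ hwc₂, hd₂, zero_mul]
  have hP₃ : 0 < Pfun ρ c w₃ := by
    rw [Psign ρ c hc w₃ hw2₃ hwc₃]
    exact mul_pos hd₃pos (mul_pos (mul_pos (hc.trans hwc₃) (by linarith)) (by linarith))
  have hab : w₁ < w₂ := hw₁.2.trans hw₂.1
  have hbc : w₂ < w₃ := hw₂.2.trans hw₃.1
  simp only [Pfun] at hP₁ hP₂ hP₃
  have hR : (1:ℝ) ≤ (ρ:ℝ) := by exact_mod_cast hρ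
  have key : (w₂ - w₁) * (((ρ:ℝ)+1) * (2 - w₃) * (w₃ - c) - (ρ:ℝ) * w₃ * (w₃ - c) - w₃ * (2 - w₃))
      = (w₂ - w₁) * (-(2*(ρ:ℝ)) * (w₃ - w₁) * (w₃ - w₂)) := by
    linear_combination (-(w₃ - w₂)) * hP₁ + (w₃ - w₁) * hP₂
  nlinarith [mul_pos (mul_pos (sub_pos.2 hab) (sub_pos.2 (hab.trans hbc))) (sub_pos.2 hbc),
    mul_pos (sub_pos.2 hab) hP₃]


theorem two_solutions_interim (ρ : ℕ) (hρ : 1 ≤ ρ) (α : ℝ)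
    (hα : alphaC ρ < α) (hα1 : α < 1) :
    ∃ x y : ℝ, x ∈ Set.Ioo (0:ℝ) 1 ∧ y ∈ Set.Ioo (0:ℝ) 1 ∧ x ≠ y ∧
      x * (1 - 2 * (1 - (1 - x) ^ 2) ^ ρ) + 1 - 1 / α = 0 ∧
      y * (1 - 2 * (1 - (1 - y) ^ 2) ^ ρ) + 1 - 1 / α = 0 ∧
      ∀ z ∈ Set.Ioo (0:ℝ) 1,
        z * (1 - 2 * (1 - (1 - z) ^ 2) ^ ρ) + 1 - 1 / α = 0 → z = x ∨ z = y := by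
  set S := {α : ℝ | 0 < α ∧ ∃ x ∈ Set.Icc (0:ℝ) 1,
    x * (1 - 2 * (1 - (1 - x) ^ 2) ^ ρ) + 1 - 1 / α > 0} with hS
  have hSne : S.Nonempty := by
    refine ⟨2, by norm_num, 0, by norm_num, ?_⟩
    norm_num
  have hα0 : 0 < α := by
    have h0le : (0:ℝ) ≤ alphaC ρ := le_csInf hSne fun b hb => hb.1.le
    linarith
  have h1α : 1 < 1 / α := by
    rw [lt_div_iff₀ hα0]; linarith
  obtain ⟨β, hβS, hβα⟩ := exists_lt_of_csInf_lt hSne hα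
  obtain ⟨hβ0, x₀, hx₀m, hx₀pos⟩ := hβS
  set f : ℝ → ℝ := fun z => z * (1 - 2 * (1 - (1 - z) ^ 2) ^ ρ) + 1 - 1 / α with hf
  have hfx₀ : 0 < f x₀ := by
    have hββ : 1 / α ≤ 1 / β := one_div_le_one_div_of_le hβ0 hβα.le
    show (0:ℝ) < x₀ * (1 - 2 * (1 - (1 - x₀) ^ 2) ^ ρ) + 1 - 1 / α
    linarith [hx₀pos]
  have hf0 : f 0 < 0 := by
    have : f 0 = 1 - 1 / α := by simp [hf]
    rw [this]; linarith
  have h1pos : (0:ℝ) < 1 / α := by positivity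
  have hf1 : f 1 < 0 := by
    have : f 1 = 1 * (1 - 2 * (1 - (1 - 1) ^ 2) ^ ρ) + 1 - 1 / α := rfl
    rw [this]; norm_num; linarith
  have hx₀0 : 0 < x₀ := by
    rcases eq_or_lt_of_le hx₀m.1 with h | h
    · exfalso; rw [← h] at hfx₀; linarith
    · exact h
  have hx₀1 : x₀ < 1 := by
    rcases eq_or_lt_of_le hx₀m.2 with h | h
    · exfalso; rw [h] at hfx₀; linarith
    · exact h
  have hcf : Continuous f := by
    rw [hf]; fun_prop
  obtain ⟨x, hxm, hfx⟩ := intermediate_value_Ioo hx₀0.le hcf.continuousOn ⟨hf0, hfx₀⟩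
  obtain ⟨y, hym, hfy⟩ := intermediate_value_Ioo' hx₀1.le hcf.continuousOn ⟨hf1, hfx₀⟩
  have hxIoo : x ∈ Set.Ioo (0:ℝ) 1 := ⟨hxm.1, hxm.2.trans hx₀1⟩
  have hyIoo : y ∈ Set.Ioo (0:ℝ) 1 := ⟨hx₀0.trans hym.1, hym.2⟩
  have hxy : x < y := hxm.2.trans hym.1
  have hc0 : 0 < 1 / α - 1 := by linarith
  have conv : ∀ z : ℝ, f z = 0 → z * (1 - 2 * (1 - (1 - z) ^ 2) ^ ρ) = 1 / α - 1 := by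
    intro z hz
    have hz' : z * (1 - 2 * (1 - (1 - z) ^ 2) ^ ρ) + 1 - 1 / α = 0 := hz
    linarith
  refine ⟨x, y, hxIoo, hyIoo, hxy.ne, hfx, hfy, ?_⟩
  intro z hzIoo hzeq
  by_contra hcon
  push_neg at hcon
  obtain ⟨hzx, hzy⟩ := hcon
  have ez := conv z hzeq
  have ex := conv x hfx
  have ey := conv y hfy
  rcases lt_trichotomy z x with h | h | h
  · exact no_three ρ hρ _ hc0 z x y hzIoo hxIoo hyIoo h hxy ez ex ey
  · exact hzx h
  · rcases lt_trichotomy z y with h' | h' | h'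
    · exact no_three ρ hρ _ hc0 x z y hxIoo hzIoo hyIoo h h' ex ez ey
    · exact hzy h'
    · exact no_three ρ hρ _ hc0 x y z hxIoo hyIoo hzIoo hxy h' ex ey ez
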